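/- Define H_l-valued rational functions F_i(x,y) = T_i + (q - q^{-1})/(x^{-1} y - 1) for distinct nonzero x, y in ℂ(q). Then the Yang–Baxter-type relation F_i(x,y) F_{i+1}(x,z) F_i(y,z) = F_{i+1}(y,z) F_i(x,z) F_{i+1}(x,y) holds whenever all factors are defined. -/

import Mathlib

noncomputable section

/-- The `H_l`-valued rational function `F_i(x,y) = T_i + (q - q⁻¹)/(x⁻¹ y - 1)`,
where `q = RatFunc.X`. -/
def heckeF {A : Type*} [Ring A] [Algebra (RatFunc ℂ) A] (T : ℕ → A)
    (i : ℕ) (x y : RatFunc ℂ) : A :=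
  T i + algebraMap (RatFunc ℂ) A
    ((RatFunc.X - (RatFunc.X)⁻¹) / (x⁻¹ * y - 1))

lemma yb_aux {R A : Type*} [CommRing R] [Ring A] [Algebra R A]
    (u v : A) (δ a b c : R)
    (hu : u * u = δ • u + 1) (hv : v * v = δ • v + 1)
    (hb : u * (v * u) = v * (u * v))
    (key : b * (δ + a + c) = a * c) :
    (u + a • (1:A)) * (v + b • 1) * (u + c • 1)
      = (v + c • 1) * (u + b • 1) * (v + a • 1) := by
  simp only [mul_add, add_mul, smul_mul_assoc, mul_smul_comm, one_mul, mul_one,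
    smul_smul, mul_assoc]
  rw [hu, hv, hb]
  simp only [smul_add, smul_smul]
  match_scalars <;> first | ring1 | linear_combination key | linear_combination 2*key | linear_combination -key

lemma key_aux {K : Type*} [Field K] (d x y z : K)
    (hx : x ≠ 0) (hy : y ≠ 0) (hz : z ≠ 0)
    (hxy : x ≠ y) (hxz : x ≠ z) (hyz : y ≠ z) :
    d / (x⁻¹ * z - 1) * (d + d / (x⁻¹ * y - 1) + d / (y⁻¹ * z - 1))
      = d / (x⁻¹ * y - 1) * (d / (y⁻¹ * z - 1)) := by
  have h1 : x - y ≠ 0 := sub_ne_zero.mpr hxy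
  have h2 : x - z ≠ 0 := sub_ne_zero.mpr hxz
  have h3 : y - z ≠ 0 := sub_ne_zero.mpr hyz
  have e1 : x⁻¹ * y - 1 = -(x - y) / x := by field_simp; ring
  have e2 : x⁻¹ * z - 1 = -(x - z) / x := by field_simp; ring
  have e3 : y⁻¹ * z - 1 = -(y - z) / y := by field_simp; ring
  rw [e1, e2, e3]
  rw [div_div_eq_mul_div, div_div_eq_mul_div, div_div_eq_mul_div]
  have n1 : -x + y ≠ 0 := fun h => h1 (by linear_combination -h)
  have n2 : -x + z ≠ 0 := fun h => h2 (by linear_combination -h)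
  have n3 : -y + z ≠ 0 := fun h => h3 (by linear_combination -h)
  have n4 : x * y - x * z + (y * z - y ^ 2) ≠ 0 := fun h =>
    mul_ne_zero h1 h3 (by linear_combination h)
  have m1 : y - x ≠ 0 := fun h => h1 (by linear_combination -h)
  have m2 : z - x ≠ 0 := fun h => h2 (by linear_combination -h)
  have m3 : z - y ≠ 0 := fun h => h3 (by linear_combination -h)
  field_simp
  ring

lemma quad_smul {A : Type*} [Ring A] [Algebra (RatFunc ℂ) A] (u : A)
    (h : (u - algebraMap (RatFunc ℂ) A RatFunc.X) *
        (u + algebraMap (RatFunc ℂ) A (RatFunc.X)⁻¹) = 0) :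
    u * u = (RatFunc.X - (RatFunc.X)⁻¹ : RatFunc ℂ) • u + 1 := by
  set φ := algebraMap (RatFunc ℂ) A
  have h1 : φ RatFunc.X * φ (RatFunc.X)⁻¹ = 1 := by
    rw [← map_mul, mul_inv_cancel₀ RatFunc.X_ne_zero, map_one]
  have hc : u * φ (RatFunc.X)⁻¹ = φ (RatFunc.X)⁻¹ * u :=
    (Algebra.commutes _ _).symm
  have e : u * u = (u - φ RatFunc.X) * (u + φ (RatFunc.X)⁻¹)
      + φ RatFunc.X * u - u * φ (RatFunc.X)⁻¹ + φ RatFunc.X * φ (RatFunc.X)⁻¹ := by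
    noncomm_ring
  rw [e, h, hc, h1, Algebra.smul_def, map_sub, sub_mul]
  noncomm_ring

/-- the Yang–Baxter-type relation
`F_i(x,y) F_{i+1}(x,z) F_i(y,z) = F_{i+1}(y,z) F_i(x,z) F_{i+1}(x,y)`
holds in the Hecke algebra whenever `x, y, z ∈ ℂ(q)` are pairwise distinct
and nonzero. -/
theorem heckeF_yang_baxter (l : ℕ) (A : Type*) [Ring A]
    [Algebra (RatFunc ℂ) A] (T : ℕ → A)
    (hquad : ∀ i, 1 ≤ i → i < l →
      (T i - algebraMap (RatFunc ℂ) A RatFunc.X) *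
        (T i + algebraMap (RatFunc ℂ) A (RatFunc.X)⁻¹) = 0)
    (hbraid : ∀ i, 1 ≤ i → i + 1 < l →
      T i * T (i + 1) * T i = T (i + 1) * T i * T (i + 1))
    (hcomm : ∀ i j, 1 ≤ i → i + 1 < j → j < l → T i * T j = T j * T i)
    (i : ℕ) (hi1 : 1 ≤ i) (hi : i + 1 < l)
    (x y z : RatFunc ℂ)
    (hx : x ≠ 0) (hy : y ≠ 0) (hz : z ≠ 0)
    (hxy : x ≠ y) (hxz : x ≠ z) (hyz : y ≠ z) :
    heckeF T i x y * heckeF T (i + 1) x z * heckeF T i y z =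
      heckeF T (i + 1) y z * heckeF T i x z * heckeF T (i + 1) x y := by
  have hu := quad_smul (T i) (hquad i hi1 (by omega))
  have hv := quad_smul (T (i+1)) (hquad (i+1) (by omega) hi)
  have hb : T i * (T (i+1) * T i) = T (i+1) * (T i * T (i+1)) := by
    have := hbraid i hi1 hi
    rwa [mul_assoc, mul_assoc] at this
  have hd1 : x⁻¹ * y - 1 ≠ 0 := by
    intro h
    apply hxy
    have h' : x⁻¹ * y = 1 := by linear_combination h
    field_simp at h'
    exact h'.symm
  have hd2 : x⁻¹ * z - 1 ≠ 0 := by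
    intro h
    apply hxz
    have h' : x⁻¹ * z = 1 := by linear_combination h
    field_simp at h'
    exact h'.symm
  have hd3 : y⁻¹ * z - 1 ≠ 0 := by
    intro h
    apply hyz
    have h' : y⁻¹ * z = 1 := by linear_combination h
    field_simp at h'
    exact h'.symm
  have key := key_aux (RatFunc.X - (RatFunc.X)⁻¹) x y z hx hy hz hxy hxz hyz
  simp only [heckeF, Algebra.algebraMap_eq_smul_one]
  exact yb_aux (T i) (T (i+1)) _ _ _ _ hu hv hb key

end
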